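/- The function f(x) = x / (1.781·ln(ln x) + 3/ln(ln x)) − 2 − 2.510·x / ln x is strictly increasing on the interval (10^6, ∞). -/

import Mathlib

set_option maxHeartbeats 1000000


lemma log_lt_half (y : ℝ) (hy : 1 < y) : Real.log y < (y - 1/y)/2 := by
  have key : StrictMonoOn (fun y : ℝ => (y - 1/y)/2 - Real.log y) (Set.Ici 1) := by
    have hd : ∀ y : ℝ, 0 < y →
        HasDerivAt (fun y : ℝ => (y - 1/y)/2 - Real.log y)
          ((1 - -(y^2)⁻¹)/2 - y⁻¹) y := by
      intro y hy0
      have h1 : HasDerivAt (fun y : ℝ => (y - 1/y)/2 - Real.log y)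
          ((1 - -(y^2)⁻¹)/2 - y⁻¹) y := by
        have := (((hasDerivAt_id y).sub (hasDerivAt_inv hy0.ne')).div_const 2).sub
          (Real.hasDerivAt_log hy0.ne')
        refine this.congr_of_eventuallyEq (Filter.Eventually.of_forall fun z => ?_)
        simp [one_div]
      simpa [one_div] using h1
    apply strictMonoOn_of_deriv_pos (convex_Ici 1)
    · intro y hy0
      have : (0:ℝ) < y := lt_of_lt_of_le one_pos hy0
      exact (hd y this).differentiableAt.continuousAt.continuousWithinAt
    · intro y hy0
      rw [interior_Ici] at hy0
      have hy1 : (0:ℝ) < y := lt_trans one_pos hy0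
      rw [(hd y hy1).deriv]
      have h2 : (1 - -(y^2)⁻¹)/2 - y⁻¹ = (y-1)^2/(2*y^2) := by
        field_simp
        ring
      rw [h2]
      have hy2 : 1 < y := hy0
      have h3 : y - 1 ≠ 0 := by linarith
      positivity
  have := key (Set.self_mem_Ici) (Set.mem_Ici.mpr hy.le) hy
  simp only [Real.log_one, one_div] at this ⊢
  norm_num at this
  linarith

lemma lt_log_aux (y : ℝ) (hy : 1 < y) : 2*(y-1)/(y+1) < Real.log y := by
  have key : StrictMonoOn (fun y : ℝ => Real.log y - 2*(y-1)/(y+1)) (Set.Ici 1) := by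
    have hd : ∀ y : ℝ, 0 < y →
        HasDerivAt (fun y : ℝ => Real.log y - 2*(y-1)/(y+1))
          (y⁻¹ - (2*1*(y+1) - 2*(y-1)*1)/(y+1)^2) y := by
      intro y hy0
      have hne : y + 1 ≠ 0 := by positivity
      exact (Real.hasDerivAt_log hy0.ne').sub
        ((((hasDerivAt_id y).sub_const 1).const_mul 2).div ((hasDerivAt_id y).add_const 1) hne)
    apply strictMonoOn_of_deriv_pos (convex_Ici 1)
    · intro y hy0
      have : (0:ℝ) < y := lt_of_lt_of_le one_pos hy0
      exact (hd y this).differentiableAt.continuousAt.continuousWithinAt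
    · intro y hy0
      rw [interior_Ici] at hy0
      have hy1 : (0:ℝ) < y := lt_trans one_pos hy0
      rw [(hd y hy1).deriv]
      have h2 : y⁻¹ - (2*1*(y+1) - 2*(y-1)*1)/(y+1)^2 = (y-1)^2/(y*(y+1)^2) := by
        field_simp
        ring
      rw [h2]
      have hy2 : 1 < y := hy0
      have h3 : y - 1 ≠ 0 := by linarith
      positivity
  have := key (Set.self_mem_Ici) (Set.mem_Ici.mpr hy.le) hy
  simp only [Real.log_one] at this
  norm_num at this
  linarith
lemma log16_eq (p : ℝ) (hp : 0 < p) : Real.log p = 4*Real.log 2 - Real.log (16/p) := by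
  rw [Real.log_div (by norm_num) hp.ne']
  have h16 : (16:ℝ) = 2^4 := by norm_num
  rw [h16, Real.log_pow]
  push_cast
  ring

lemma log_lb (p l : ℝ) (hp : 0 < p) (hp16 : p < 16)
    (h : l + (16/p - p/16)/2 ≤ 4*(0.6931471803:ℝ)) : l ≤ Real.log p := by
  have hy : 1 < 16/p := (one_lt_div hp).mpr hp16
  have h2 := log_lt_half (16/p) hy
  rw [one_div_div] at h2
  have hlog2 : (0.6931471803:ℝ) < Real.log 2 := Real.log_two_gt_d9
  rw [log16_eq p hp]
  linarith

lemma log_ub (p u : ℝ) (hp : 0 < p) (hp16 : p < 16)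
    (h : 4*(0.6931471808:ℝ) ≤ u + 2*(16/p-1)/(16/p+1)) : Real.log p ≤ u := by
  have hy : 1 < 16/p := (one_lt_div hp).mpr hp16
  have h2 := lt_log_aux (16/p) hy
  have hlog2 : Real.log 2 < (0.6931471808:ℝ) := Real.log_two_lt_d9
  rw [log16_eq p hp]
  linarith


-- ln 10 > 2.302
lemma log_ten_gt : (2.302:ℝ) < Real.log 10 := by
  have h1 : Real.log 10 = 3*Real.log 2 + (Real.log (16/15) + Real.log (75/64)) := by
    rw [← Real.log_mul (by norm_num) (by norm_num)]
    have h8 : (10:ℝ) = 2^3 * ((16/15) * (75/64)) := by norm_num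
    rw [h8, Real.log_mul (by norm_num) (by norm_num), Real.log_pow]
    push_cast; ring
  have h2 := lt_log_aux (16/15) (by norm_num)
  have h3 := lt_log_aux (75/64) (by norm_num)
  have hlog2 : (0.6931471803:ℝ) < Real.log 2 := Real.log_two_gt_d9
  rw [h1]
  norm_num at h2 h3 ⊢
  linarith
lemma log16_ub : Real.log 16 ≤ (2.772589:ℝ) := by
  have hlog2 : Real.log 2 < (0.6931471808:ℝ) := Real.log_two_lt_d9
  have h16e : (16:ℝ) = 2^4 := by norm_num
  rw [h16e, Real.log_pow]
  push_cast
  linarith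

lemma interval_key (t L a b l u : ℝ) (hat : a ≤ t) (htb : t ≤ b)
    (hlL : l ≤ L) (hLu : L ≤ u) (hl : 1.3 ≤ l) (ha : 2 ≤ a)
    (hkey : 2.51*(1.781*u + 3/l)*((b-1)/b) + (1.781 - 3/u^2)/(1.781*l + 3/u) < a) :
    2.51*(1.781*L + 3/L)*((t-1)/t) + (1.781 - 3/L^2)/(1.781*L + 3/L) < t := by
  have hl0 : (0:ℝ) < l := by linarith
  have hL0 : (0:ℝ) < L := by linarith
  have hu0 : (0:ℝ) < u := by linarith
  have ht0 : (0:ℝ) < t := by linarith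
  have hb0 : (0:ℝ) < b := by linarith
  -- g bounds
  have hinv1 : 3/L ≤ 3/l := by
    apply div_le_div_of_nonneg_left (by norm_num) hl0 hlL
  have hinv2 : 3/u ≤ 3/L := by
    apply div_le_div_of_nonneg_left (by norm_num) hL0 hLu
  have hg_hi : 1.781*L + 3/L ≤ 1.781*u + 3/l := by linarith
  have hg_lo : 1.781*l + 3/u ≤ 1.781*L + 3/L := by linarith
  have hglo_pos : (0:ℝ) < 1.781*l + 3/u := by positivity
  have hg_pos : (0:ℝ) < 1.781*L + 3/L := by positivity
  -- numerator bounds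
  have hinvsq : 3/u^2 ≤ 3/L^2 := by
    apply div_le_div_of_nonneg_left (by norm_num) (by positivity) (by nlinarith)
  have hc_hi : 1.781 - 3/L^2 ≤ 1.781 - 3/u^2 := by linarith
  have hc_nonneg : (0:ℝ) ≤ 1.781 - 3/u^2 := by
    have : 3/u^2 ≤ 3/1.3^2 := by
      apply div_le_div_of_nonneg_left (by norm_num) (by norm_num) (by nlinarith)
    nlinarith
  -- term 2 bound
  have hterm2 : (1.781 - 3/L^2)/(1.781*L + 3/L) ≤ (1.781 - 3/u^2)/(1.781*l + 3/u) :=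
    div_le_div₀ hc_nonneg hc_hi hglo_pos hg_lo
  -- term 1 bound
  have hfrac : (t-1)/t ≤ (b-1)/b := by
    rw [div_le_div_iff₀ ht0 hb0]
    nlinarith
  have hfrac0 : (0:ℝ) ≤ (t-1)/t := by
    apply div_nonneg (by linarith) (by linarith)
  have hfracb0 : (0:ℝ) ≤ (b-1)/b := by
    apply div_nonneg (by linarith) (by linarith)
  have hterm1 : 2.51*(1.781*L + 3/L)*((t-1)/t) ≤ 2.51*(1.781*u + 3/l)*((b-1)/b) := by
    have h1 : (1.781*L + 3/L)*((t-1)/t) ≤ (1.781*u + 3/l)*((b-1)/b) :=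
      mul_le_mul hg_hi hfrac hfrac0 (by linarith)
    nlinarith
  linarith

lemma tail_key (t : ℝ) (h16 : (16:ℝ) ≤ t) :
    2.51*(1.781*Real.log t + 3/Real.log t)*((t-1)/t)
      + (1.781 - 3/(Real.log t)^2)/(1.781*Real.log t + 3/Real.log t) < t := by
  set L := Real.log t with hLdef
  have ht0 : (0:ℝ) < t := by linarith
  have hlog2lo : (0.6931471803:ℝ) < Real.log 2 := Real.log_two_gt_d9
  have hlog2hi : Real.log 2 < (0.6931471808:ℝ) := Real.log_two_lt_d9
  have hlog16 : Real.log 16 = 4*Real.log 2 := by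
    have h16e : (16:ℝ) = 2^4 := by norm_num
    rw [h16e, Real.log_pow]; push_cast; ring
  have hL_lo : (2.7725887212:ℝ) ≤ L := by
    have h1 : Real.log 16 ≤ L := Real.log_le_log (by norm_num) h16
    rw [hlog16] at h1; linarith
  have hL_hi : L ≤ (1.7725887232:ℝ) + t/16 := by
    have h1 : Real.log (t/16) ≤ t/16 - 1 := Real.log_le_sub_one_of_pos (by positivity)
    have h2 : Real.log (t/16) = L - Real.log 16 := by
      rw [hLdef, Real.log_div ht0.ne' (by norm_num)]
    rw [h2, hlog16] at h1
    linarith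
  have hL0 : (0:ℝ) < L := by linarith
  have hg_pos : (0:ℝ) < 1.781*L + 3/L := by positivity
  -- c/g ≤ 1/L ≤ 1/2.7725887212
  have hterm2 : (1.781 - 3/L^2)/(1.781*L + 3/L) ≤ 1/(2.7725887212:ℝ) := by
    have h1 : (1.781 - 3/L^2)/(1.781*L + 3/L) ≤ 1.781/(1.781*L) := by
      apply div_le_div₀ (by norm_num) _ (by positivity) _
      · have : (0:ℝ) < 3/L^2 := by positivity
        linarith
      · have : (0:ℝ) ≤ 3/L := by positivity
        linarith
    have h2 : 1.781/(1.781*L) = 1/L := by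
      rw [div_eq_div_iff (by positivity) hL0.ne']
      ring
    have h3 : 1/L ≤ 1/(2.7725887212:ℝ) := by
      apply div_le_div_of_nonneg_left (by norm_num) (by norm_num) hL_lo
    rw [h2] at h1
    linarith
  have hfrac : (t-1)/t ≤ 1 := by
    rw [div_le_one ht0]; linarith
  have hfrac0 : (0:ℝ) ≤ (t-1)/t := div_nonneg (by linarith) (by linarith)
  have hg_hi : 1.781*L + 3/L ≤ 1.781*((1.7725887232:ℝ) + t/16) + 3/(2.7725887212:ℝ) := by
    have h1 : 3/L ≤ 3/(2.7725887212:ℝ) :=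
      div_le_div_of_nonneg_left (by norm_num) (by norm_num) hL_lo
    nlinarith
  have hg_nonneg : (0:ℝ) ≤ 1.781*L + 3/L := hg_pos.le
  have hterm1 : 2.51*(1.781*L + 3/L)*((t-1)/t)
      ≤ 2.51*(1.781*((1.7725887232:ℝ) + t/16) + 3/(2.7725887212:ℝ)) := by
    have h1 : (1.781*L + 3/L)*((t-1)/t) ≤ (1.781*((1.7725887232:ℝ) + t/16) + 3/(2.7725887212:ℝ))*1 :=
      mul_le_mul hg_hi hfrac hfrac0 (by nlinarith)
    nlinarith
  have hnum : 2.51*(1.781*((1.7725887232:ℝ) + t/16) + 3/(2.7725887212:ℝ)) + 1/(2.7725887212:ℝ) < t := by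
    norm_num
    linarith
  linarith
lemma keyF (t : ℝ) (ht : (13.812:ℝ) < t) :
    2.51*(1.781*Real.log t + 3/Real.log t)*((t-1)/t)
      + (1.781 - 3/(Real.log t)^2)/(1.781*Real.log t + 3/Real.log t) < t := by
  rcases le_or_gt t 13.84 with h0|h0
  · exact interval_key t (Real.log t) 13.812 13.84 2.625007 2.627817 ht.le h0
      (le_trans (log_lb 13.812 2.625007 (by norm_num) (by norm_num) (by norm_num))
        (Real.log_le_log (by norm_num) (by linarith)))
      (le_trans (Real.log_le_log (by linarith) h0)
        (log_ub 13.84 2.627817 (by norm_num) (by norm_num) (by norm_num)))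
      (by norm_num) (by norm_num) (by norm_num)
  rcases le_or_gt t 13.88 with h1|h1
  · exact interval_key t (Real.log t) 13.84 13.88 2.627054 2.630688 h0.le h1
      (le_trans (log_lb 13.84 2.627054 (by norm_num) (by norm_num) (by norm_num))
        (Real.log_le_log (by norm_num) (by linarith)))
      (le_trans (Real.log_le_log (by linarith) h1)
        (log_ub 13.88 2.630688 (by norm_num) (by norm_num) (by norm_num)))
      (by norm_num) (by norm_num) (by norm_num)
  rcases le_or_gt t 13.94 with h2|h2
  · exact interval_key t (Real.log t) 13.88 13.94 2.629969 2.634981 h1.le h2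
      (le_trans (log_lb 13.88 2.629969 (by norm_num) (by norm_num) (by norm_num))
        (Real.log_le_log (by norm_num) (by linarith)))
      (le_trans (Real.log_le_log (by linarith) h2)
        (log_ub 13.94 2.634981 (by norm_num) (by norm_num) (by norm_num)))
      (by norm_num) (by norm_num) (by norm_num)
  rcases le_or_gt t 14.03 with h3|h3
  · exact interval_key t (Real.log t) 13.94 14.03 2.634325 2.641387 h2.le h3
      (le_trans (log_lb 13.94 2.634325 (by norm_num) (by norm_num) (by norm_num))
        (Real.log_le_log (by norm_num) (by linarith)))
      (le_trans (Real.log_le_log (by linarith) h3)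
        (log_ub 14.03 2.641387 (by norm_num) (by norm_num) (by norm_num)))
      (by norm_num) (by norm_num) (by norm_num)
  rcases le_or_gt t 14.18 with h4|h4
  · exact interval_key t (Real.log t) 14.03 14.18 2.640819 2.651980 h3.le h4
      (le_trans (log_lb 14.03 2.640819 (by norm_num) (by norm_num) (by norm_num))
        (Real.log_le_log (by norm_num) (by linarith)))
      (le_trans (Real.log_le_log (by linarith) h4)
        (log_ub 14.18 2.651980 (by norm_num) (by norm_num) (by norm_num)))
      (by norm_num) (by norm_num) (by norm_num)
  rcases le_or_gt t 14.42 with h5|h5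
  · exact interval_key t (Real.log t) 14.18 14.42 2.651538 2.668710 h4.le h5
      (le_trans (log_lb 14.18 2.651538 (by norm_num) (by norm_num) (by norm_num))
        (Real.log_le_log (by norm_num) (by linarith)))
      (le_trans (Real.log_le_log (by linarith) h5)
        (log_ub 14.42 2.668710 (by norm_num) (by norm_num) (by norm_num)))
      (by norm_num) (by norm_num) (by norm_num)
  rcases le_or_gt t 14.8 with h6|h6
  · exact interval_key t (Real.log t) 14.42 14.8 2.668428 2.694667 h5.le h6
      (le_trans (log_lb 14.42 2.668428 (by norm_num) (by norm_num) (by norm_num))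
        (Real.log_le_log (by norm_num) (by linarith)))
      (le_trans (Real.log_le_log (by linarith) h6)
        (log_ub 14.8 2.694667 (by norm_num) (by norm_num) (by norm_num)))
      (by norm_num) (by norm_num) (by norm_num)
  rcases le_or_gt t 15.4 with h7|h7
  · exact interval_key t (Real.log t) 14.8 15.4 2.694548 2.734373 h6.le h7
      (le_trans (log_lb 14.8 2.694548 (by norm_num) (by norm_num) (by norm_num))
        (Real.log_le_log (by norm_num) (by linarith)))
      (le_trans (Real.log_le_log (by linarith) h7)
        (log_ub 15.4 2.734373 (by norm_num) (by norm_num) (by norm_num)))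
      (by norm_num) (by norm_num) (by norm_num)
  rcases le_or_gt t 16 with h8|h8
  · exact interval_key t (Real.log t) 15.4 16 2.734358 2.772589 h7.le h8
      (le_trans (log_lb 15.4 2.734358 (by norm_num) (by norm_num) (by norm_num))
        (Real.log_le_log (by norm_num) (by linarith)))
      (le_trans (Real.log_le_log (by linarith) h8) log16_ub)
      (by norm_num) (by norm_num) (by norm_num)
  · exact tail_key t (by linarith)

lemma main_aux (x : ℝ) (hx : (10:ℝ)^6 < x) :
    HasDerivAt (fun x : ℝ =>
        x / (1.781 * Real.log (Real.log x) + 3 / Real.log (Real.log x)) - 2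
          - 2.510 * x / Real.log x)
      ((1 * (1.781 * Real.log (Real.log x) + 3 / Real.log (Real.log x))
          - x * (1.781 * ((Real.log x)⁻¹ * x⁻¹)
            + (0 * Real.log (Real.log x) - 3 * ((Real.log x)⁻¹ * x⁻¹)) / (Real.log (Real.log x))^2))
        / (1.781 * Real.log (Real.log x) + 3 / Real.log (Real.log x))^2
        - (2.510 * 1 * Real.log x - 2.510 * x * x⁻¹) / (Real.log x)^2) x ∧
    0 < ((1 * (1.781 * Real.log (Real.log x) + 3 / Real.log (Real.log x))
          - x * (1.781 * ((Real.log x)⁻¹ * x⁻¹)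
            + (0 * Real.log (Real.log x) - 3 * ((Real.log x)⁻¹ * x⁻¹)) / (Real.log (Real.log x))^2))
        / (1.781 * Real.log (Real.log x) + 3 / Real.log (Real.log x))^2
        - (2.510 * 1 * Real.log x - 2.510 * x * x⁻¹) / (Real.log x)^2) := by
  have hx0 : (0:ℝ) < x := lt_trans (by norm_num) hx
  have ht : (13.812:ℝ) < Real.log x := by
    have h1 : Real.log (10^6) < Real.log x := Real.log_lt_log (by norm_num) hx
    have h2 : Real.log ((10:ℝ)^6) = 6 * Real.log 10 := by
      rw [show ((10:ℝ)^6) = (10:ℝ)^(6:ℕ) by norm_num, Real.log_pow]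
      push_cast; ring
    have := log_ten_gt
    rw [h2] at h1
    linarith
  have ht0 : (0:ℝ) < Real.log x := by linarith
  have hL : (2.625007:ℝ) ≤ Real.log (Real.log x) := by
    refine le_trans (log_lb 13.812 2.625007 (by norm_num) (by norm_num) (by norm_num)) ?_
    exact Real.log_le_log (by norm_num) ht.le
  have hL0 : (0:ℝ) < Real.log (Real.log x) := by linarith
  have hg0 : (0:ℝ) < 1.781 * Real.log (Real.log x) + 3 / Real.log (Real.log x) := by positivity
  -- derivative construction
  have hlogx : HasDerivAt Real.log x⁻¹ x := Real.hasDerivAt_log hx0.ne'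
  have hLL : HasDerivAt (fun y : ℝ => Real.log (Real.log y)) ((Real.log x)⁻¹ * x⁻¹) x := by
    exact (Real.hasDerivAt_log ht0.ne').comp x hlogx
  have hD : HasDerivAt (fun y : ℝ => 1.781 * Real.log (Real.log y) + 3 / Real.log (Real.log y))
      (1.781 * ((Real.log x)⁻¹ * x⁻¹)
        + (0 * Real.log (Real.log x) - 3 * ((Real.log x)⁻¹ * x⁻¹)) / (Real.log (Real.log x))^2) x :=
    (hLL.const_mul 1.781).add ((hasDerivAt_const x 3).div hLL hL0.ne')
  have h1 : HasDerivAt (fun y : ℝ => y / (1.781 * Real.log (Real.log y) + 3 / Real.log (Real.log y)))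
      ((1 * (1.781 * Real.log (Real.log x) + 3 / Real.log (Real.log x))
          - x * (1.781 * ((Real.log x)⁻¹ * x⁻¹)
            + (0 * Real.log (Real.log x) - 3 * ((Real.log x)⁻¹ * x⁻¹)) / (Real.log (Real.log x))^2))
        / (1.781 * Real.log (Real.log x) + 3 / Real.log (Real.log x))^2) x :=
    (hasDerivAt_id x).div hD hg0.ne'
  have h2 : HasDerivAt (fun y : ℝ => 2.510 * y / Real.log y)
      ((2.510 * 1 * Real.log x - 2.510 * x * x⁻¹) / (Real.log x)^2) x :=
    ((hasDerivAt_id x).const_mul 2.510).div hlogx ht0.ne'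
  constructor
  · exact (h1.sub_const 2).sub h2
  · have hkey := keyF (Real.log x) ht
    have heq : (1 * (1.781 * Real.log (Real.log x) + 3 / Real.log (Real.log x))
          - x * (1.781 * ((Real.log x)⁻¹ * x⁻¹)
            + (0 * Real.log (Real.log x) - 3 * ((Real.log x)⁻¹ * x⁻¹)) / (Real.log (Real.log x))^2))
        / (1.781 * Real.log (Real.log x) + 3 / Real.log (Real.log x))^2
        - (2.510 * 1 * Real.log x - 2.510 * x * x⁻¹) / (Real.log x)^2
        = (Real.log x
            - (2.51*(1.781*Real.log (Real.log x) + 3/Real.log (Real.log x))*((Real.log x - 1)/Real.log x)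
              + (1.781 - 3/(Real.log (Real.log x))^2)
                / (1.781*Real.log (Real.log x) + 3/Real.log (Real.log x))))
          / (Real.log x * (1.781*Real.log (Real.log x) + 3/Real.log (Real.log x))) := by
      field_simp
      ring
    rw [heq]
    apply div_pos
    · linarith
    · positivity

/-- The function `f(x) = x / (1.781·ln(ln x) + 3 / ln(ln x)) - 2 - 2.510·x / ln x`
is strictly increasing on the interval `(10^6, ∞)`. -/
theorem stmt_8 :
    StrictMonoOn
      (fun x : ℝ =>
        x / (1.781 * Real.log (Real.log x) + 3 / Real.log (Real.log x)) - 2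
          - 2.510 * x / Real.log x)
      (Set.Ioi (10 ^ 6 : ℝ)) := by
  apply strictMonoOn_of_deriv_pos (convex_Ioi _)
  · intro x hx
    exact (main_aux x hx).1.differentiableAt.continuousAt.continuousWithinAt
  · intro x hx
    rw [interior_Ioi] at hx
    rw [(main_aux x hx).1.deriv]
    exact (main_aux x hx).2
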